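/- arXiv:1907.04121 — 2 statements merged into one kernel-verified Lean document; each statement's English description precedes it below -/
import Mathlib

section
/- Let x ∈ W^λ and let s ∈ S' be a simple reflection such that sx ∉ xW_λ. Then sx ∈ W^λ, and the map z ↦ sz is a bijection from the coset xW_λ onto the coset (sx)W_λ such that for all z, z' ∈ xW_λ one has z ⋖ z' if and only if sz ⋖ sz' (i.e. left multiplication by s is an isomorphism of the directed graphs of Bruhat covers of the two cosets). -/
/-!
Setup: a Coxeter system `(W, S')` with Bruhat order defined via the subword property,
a subset `S` of the simple reflections (indexed by `S : Set B`), the standard parabolic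
subgroup `W_λ = ⟨S⟩`, and the set `W^λ` of minimal-length left coset representatives.
-/

namespace SingularBGG

variable {B W : Type*} [Group W] {M : CoxeterMatrix B}

/-- Bruhat order on a Coxeter group: `u ≤ v` iff some (equivalently, every) reduced word
for `v` contains a subword which is a reduced word for `u`. -/
def BruhatLE (cs : CoxeterSystem M W) (u v : W) : Prop :=
  ∃ ω : List B, cs.IsReduced ω ∧ cs.wordProd ω = v ∧
    ∃ ω' : List B, ω'.Sublist ω ∧ cs.IsReduced ω' ∧ cs.wordProd ω' = u

/-- Strict Bruhat order. -/
def BruhatLT (cs : CoxeterSystem M W) (u v : W) : Prop :=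
  BruhatLE cs u v ∧ u ≠ v

/-- Bruhat covering relation `u ⋖ v`: `u < v` and `ℓ(v) = ℓ(u) + 1`. -/
def BruhatCov (cs : CoxeterSystem M W) (u v : W) : Prop :=
  BruhatLT cs u v ∧ cs.length v = cs.length u + 1

/-- The standard parabolic subgroup `W_λ` generated by the simple reflections indexed
by `S`. -/
def paraSubgroup (cs : CoxeterSystem M W) (S : Set B) : Subgroup W :=
  Subgroup.closure (cs.simple '' S)

/-- The left coset `x·W_λ`. -/
def leftCosetOf (cs : CoxeterSystem M W) (S : Set B) (x : W) : Set W :=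
  {z : W | x⁻¹ * z ∈ paraSubgroup cs S}

/-- `x` is a minimal-length representative of its left coset `x·W_λ`, i.e. `x ∈ W^λ`. -/
def IsMinRep (cs : CoxeterSystem M W) (S : Set B) (x : W) : Prop :=
  ∀ z ∈ leftCosetOf cs S x, cs.length x ≤ cs.length z


section Machinery

open List CoxeterSystem
open scoped Classical

variable (cs : CoxeterSystem M W)

local prefix:100 "s" => cs.simple
local prefix:100 "π" => cs.wordProd
local prefix:100 "ℓ" => cs.length
local prefix:100 "ris" => cs.rightInvSeq

lemma zmod2_cases (x : ZMod 2) : x = 0 ∨ x = 1 := by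
  fin_cases x
  · left; rfl
  · right; rfl

lemma zmod2_add_self (x : ZMod 2) : x + x = 0 := by
  rcases zmod2_cases x with h | h <;> rw [h] <;> decide

lemma simple_conj_eq_simple_iff (i : B) (t : W) :
    s i * t * s i = s i ↔ t = s i := by
  constructor
  · intro h
    have := congrArg (fun z => s i * z * s i) h
    rwa [← mul_assoc, ← mul_assoc, cs.simple_mul_simple_self, one_mul, mul_assoc,
      cs.simple_mul_simple_self, mul_one, one_mul] at this
  · rintro rfl
    rw [cs.simple_mul_simple_self, one_mul]

/-- The basic involution of `W × ZMod 2` attached to a simple reflection. -/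
noncomputable def permS (i : B) : Equiv.Perm (W × ZMod 2) :=
  Function.Involutive.toPerm
    (fun p => (s i * p.1 * s i, p.2 + if p.1 = s i then 1 else 0))
    (by
      rintro ⟨t, ε⟩
      have h1 : s i * (s i * t * s i) * s i = t := by
        rw [← mul_assoc, ← mul_assoc, cs.simple_mul_simple_self, one_mul, mul_assoc,
          cs.simple_mul_simple_self, mul_one]
      simp only [simple_conj_eq_simple_iff, h1, Prod.mk.injEq]
      refine ⟨trivial, ?_⟩
      rcases eq_or_ne t (s i) with h | h
      · simp [h, add_assoc]
        decide
      · simp [h])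

lemma permS_apply (i : B) (t : W) (ε : ZMod 2) :
    permS cs i (t, ε) = (s i * t * s i, ε + if t = s i then 1 else 0) := rfl

lemma conj_eq_iff (g t u : W) : g * t * g⁻¹ = u ↔ t = g⁻¹ * u * g := by
  constructor
  · intro h; rw [← h]; group
  · intro h; rw [h]; group

lemma eq_inv_mul_iff (g u t : W) : t = g⁻¹ * u ↔ g = u * t⁻¹ := by
  constructor
  · intro h; rw [h]; group
  · intro h; rw [h]; group

lemma permS_mul_apply (i j : B) (t : W) (ε : ZMod 2) :
    (permS cs i * permS cs j) (t, ε) =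
      ((s i * s j) * t * (s i * s j)⁻¹,
        ε + ((if t = s j then 1 else 0) + (if t = s j * s i * s j then 1 else 0))) := by
  have h2 : (s j * t * s j = s i) ↔ (t = s j * s i * s j) := by
    rw [show s j * t * s j = s j * t * (s j)⁻¹ by rw [cs.inv_simple], conj_eq_iff,
      cs.inv_simple]
  rw [Equiv.Perm.mul_apply, permS_apply, permS_apply]
  congr 1
  · rw [mul_inv_rev, cs.inv_simple, cs.inv_simple]
    group
  · rw [if_congr h2 rfl rfl, add_assoc]

/-- Key dihedral computation: the braid relation holds for `permS`. -/
lemma permS_liftable : CoxeterMatrix.IsLiftable M (permS cs) := by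
  intro i j
  set p := s i * s j with hp
  have hswap1 : s j * p = p⁻¹ * s j := by
    rw [hp, mul_inv_rev, cs.inv_simple, cs.inv_simple, ← mul_assoc]
  have hswap : ∀ a : ℕ, s j * p ^ a = (p ^ a)⁻¹ * s j := by
    intro a
    induction a with
    | zero => simp
    | succ a ih =>
      rw [pow_succ, ← mul_assoc, ih, mul_assoc, hswap1]
      group
  -- the indicator function
  set f : W → ℕ → ZMod 2 := fun t l => if p ^ l = s j * t⁻¹ then 1 else 0 with hf
  have hshift : ∀ (t : W) (l : ℕ), f (p * t * p⁻¹) l = f t (l + 2) := by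
    intro t l
    have harg : s j * (p * t * p⁻¹)⁻¹ = p⁻¹ * (s j * t⁻¹) * p⁻¹ := by
      calc s j * (p * t * p⁻¹)⁻¹ = (s j * p) * (t⁻¹ * p⁻¹) := by group
        _ = (p⁻¹ * s j) * (t⁻¹ * p⁻¹) := by rw [hswap1]
        _ = p⁻¹ * (s j * t⁻¹) * p⁻¹ := by group
    have hp2 : p ^ (l + 2) = p * p ^ l * p := by
      rw [show l + 2 = 1 + l + 1 by omega, pow_add, pow_add, pow_one]
    simp only [hf, harg, hp2]
    refine if_congr ?_ rfl rfl
    constructor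
    · intro h; rw [h]; group
    · intro h
      have : p⁻¹ * (p * p ^ l * p) * p⁻¹ = p⁻¹ * (s j * t⁻¹) * p⁻¹ := by rw [h]
      rw [← this]; group
  have hcond1 : ∀ t : W, (t = s j) ↔ (p ^ 0 = s j * t⁻¹) := by
    intro t
    rw [pow_zero]
    constructor
    · intro h; rw [h, cs.inv_simple, cs.simple_mul_simple_self]
    · intro h
      have h2 := mul_eq_one_iff_eq_inv.mp h.symm
      rw [inv_inv] at h2
      exact h2.symm
  have hcond2 : ∀ t : W, (t = s j * s i * s j) ↔ (p ^ 1 = s j * t⁻¹) := by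
    intro t
    rw [pow_one]
    constructor
    · intro h
      have hti : t⁻¹ = s j * s i * s j := by
        rw [h, mul_inv_rev, mul_inv_rev, cs.inv_simple, cs.inv_simple]
        group
      rw [hti, hp]
      rw [show s j * (s j * s i * s j) = (s j * s j) * (s i * s j) by group,
        cs.simple_mul_simple_self, one_mul]
    · intro h
      have ht : t = (s j * t⁻¹)⁻¹ * s j := by group
      rw [ht, ← h, hp]
      rw [mul_inv_rev, cs.inv_simple, cs.inv_simple]
  have iter : ∀ (k : ℕ) (t : W) (ε : ZMod 2),
      ((permS cs i * permS cs j) ^ k) (t, ε) =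
        (p ^ k * t * (p ^ k)⁻¹,
          ε + ∑ a ∈ Finset.range k, (f t (2 * a) + f t (2 * a + 1))) := by
    intro k
    induction k with
    | zero => intro t ε; simp
    | succ k ih =>
      intro t ε
      rw [pow_succ, Equiv.Perm.mul_apply, permS_mul_apply, ← hp, ih]
      have hfst : p ^ k * (p * t * p⁻¹) * (p ^ k)⁻¹ = p ^ (k + 1) * t * (p ^ (k + 1))⁻¹ := by
        rw [pow_succ]
        group
      have hsnd : ∀ a : ℕ, f (p * t * p⁻¹) (2 * a) + f (p * t * p⁻¹) (2 * a + 1)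
          = f t (2 * (a + 1)) + f t (2 * (a + 1) + 1) := by
        intro a
        rw [hshift, hshift, show 2 * a + 2 = 2 * (a + 1) by omega,
          show 2 * a + 1 + 2 = 2 * (a + 1) + 1 by omega]
      rw [Prod.mk.injEq]
      constructor
      · exact hfst
      · rw [Finset.sum_congr rfl (fun a _ => hsnd a), Finset.sum_range_succ']
        have hchi : ((if t = s j then (1 : ZMod 2) else 0) + if t = s j * s i * s j then 1 else 0)
            = f t (2 * 0) + f t (2 * 0 + 1) := by
          rw [if_congr (hcond1 t) rfl rfl, if_congr (hcond2 t) rfl rfl]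
        rw [hchi]
        ring
  apply Equiv.ext
  rintro ⟨t, ε⟩
  rw [iter (M i j) t ε]
  simp only [Equiv.Perm.one_apply]
  rw [Prod.mk.injEq]
  constructor
  · rw [cs.simple_mul_simple_pow i j]
    group
  · have hl : ∑ a ∈ Finset.range (M i j), (f t (2 * a) + f t (2 * a + 1))
        = ∑ l ∈ Finset.range (2 * M i j), f t l := by
      generalize M i j = m
      induction m with
      | zero => simp
      | succ m ih =>
        rw [Finset.sum_range_succ, ih, show 2 * (m + 1) = (2 * m + 1) + 1 by omega,
          Finset.sum_range_succ, Finset.sum_range_succ]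
        ring_nf
    rw [hl, two_mul, Finset.sum_range_add]
    have hper : ∀ l, f t (M i j + l) = f t l := by
      intro l
      simp only [hf, pow_add, hp, cs.simple_mul_simple_pow i j, one_mul]
    rw [Finset.sum_congr rfl (fun l _ => hper l), ← Finset.sum_add_distrib]
    rw [Finset.sum_congr rfl (fun l _ => zmod2_add_self (f t l)), Finset.sum_const]
    simp

/-- The parity representation of `W`. -/
noncomputable def invPerm : W →* Equiv.Perm (W × ZMod 2) :=
  cs.lift ⟨permS cs, permS_liftable cs⟩

lemma invPerm_simple (i : B) : invPerm cs (s i) = permS cs i :=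
  cs.lift_apply_simple (permS_liftable cs) i

/-- `Nn cs w t` is the mod-2 number of occurrences of `t` among the (right) inversions of `w`. -/
noncomputable def Nn (w t : W) : ZMod 2 := (invPerm cs w (t, 0)).2

lemma invPerm_wordProd (ω : List B) (t : W) (ε : ZMod 2) :
    invPerm cs (π ω) (t, ε) = (π ω * t * (π ω)⁻¹, ε + ((ris ω).count t : ZMod 2)) := by
  induction ω generalizing t ε with
  | nil => simp
  | cons i ω ih =>
    rw [cs.wordProd_cons, map_mul, Equiv.Perm.mul_apply, ih, invPerm_simple, permS_apply]
    have hris : ris (i :: ω) = ((π ω)⁻¹ * s i * π ω) :: ris ω := rfl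
    rw [hris, List.count_cons]
    refine Prod.ext ?_ ?_
    · show s i * (π ω * t * (π ω)⁻¹) * s i = π (i :: ω) * t * (π (i :: ω))⁻¹
      rw [cs.wordProd_cons, mul_inv_rev, cs.inv_simple]
      group
    · show ε + ((ris ω).count t : ZMod 2) + _ = ε + _
      have hcond : (π ω * t * (π ω)⁻¹ = s i) ↔ ((π ω)⁻¹ * s i * π ω = t) := by
        rw [conj_eq_iff]
        constructor
        · intro h; rw [h]
        · intro h; rw [← h]
      rw [if_congr hcond rfl rfl]
      push_cast
      rcases eq_or_ne ((π ω)⁻¹ * s i * π ω) t with h | h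
      · simp [h, add_assoc]
      · simp [h]

lemma Nn_wordProd (ω : List B) (t : W) :
    Nn cs (π ω) t = ((ris ω).count t : ZMod 2) := by
  have := invPerm_wordProd cs ω t 0
  rw [zero_add] at this
  rw [Nn, this]

lemma invPerm_apply (w t : W) (ε : ZMod 2) :
    invPerm cs w (t, ε) = (w * t * w⁻¹, ε + Nn cs w t) := by
  obtain ⟨ω, rfl⟩ := cs.wordProd_surjective w
  rw [invPerm_wordProd, Nn_wordProd]

lemma Nn_mul (a b t : W) : Nn cs (a * b) t = Nn cs b t + Nn cs a (b * t * b⁻¹) := by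
  have : invPerm cs (a * b) (t, 0) = invPerm cs a (invPerm cs b (t, 0)) := by
    rw [map_mul, Equiv.Perm.mul_apply]
  rw [Nn, this, invPerm_apply cs b t 0, zero_add, invPerm_apply, Nn]

lemma Nn_simple (i : B) (t : W) : Nn cs (s i) t = if t = s i then 1 else 0 := by
  rw [Nn, invPerm_simple, permS_apply, zero_add]

lemma Nn_one (t : W) : Nn cs 1 t = 0 := by
  rw [Nn, map_one]
  rfl

lemma zmod2_eq_of_add_eq_zero {x y : ZMod 2} (h : x + y = 0) : x = y := by
  rcases zmod2_cases x with hx | hx <;> rcases zmod2_cases y with hy | hy <;>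
    rw [hx, hy] <;> rw [hx, hy] at h <;> first | rfl | exact absurd h (by decide)

lemma Nn_inv (v t : W) : Nn cs v⁻¹ t = Nn cs v (v⁻¹ * t * v) := by
  have h0 : Nn cs (v * v⁻¹) t = Nn cs v⁻¹ t + Nn cs v (v⁻¹ * t * v⁻¹⁻¹) := Nn_mul cs v v⁻¹ t
  rw [mul_inv_cancel, Nn_one, inv_inv] at h0
  exact zmod2_eq_of_add_eq_zero h0.symm

lemma Nn_refl_self {t : W} (ht : cs.IsReflection t) : Nn cs t t = 1 := by
  obtain ⟨v, i, rfl⟩ := ht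
  have hconj : v⁻¹ * (v * s i * v⁻¹) * v = s i := by group
  have h1 : Nn cs (v * s i * v⁻¹) (v * s i * v⁻¹)
      = Nn cs v⁻¹ (v * s i * v⁻¹) + Nn cs (v * s i) (s i) := by
    have h := Nn_mul cs (v * s i) v⁻¹ (v * s i * v⁻¹)
    rw [show v⁻¹ * (v * s i * v⁻¹) * v⁻¹⁻¹ = s i by group] at h
    exact h
  have h2 : Nn cs (v * s i) (s i) = 1 + Nn cs v (s i) := by
    have := Nn_mul cs v (s i) (s i)
    rw [this, Nn_simple, if_pos rfl, show s i * s i * (s i)⁻¹ = s i by group]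
  have h3 : Nn cs v⁻¹ (v * s i * v⁻¹) = Nn cs v (s i) := by
    rw [Nn_inv]
    rw [hconj]
  rw [h1, h2, h3, ← add_assoc, add_comm (Nn cs v (s i)) 1, add_assoc, zmod2_add_self, add_zero]

lemma Nn_eq_one_iff {t : W} (ht : cs.IsReflection t) (w : W) :
    Nn cs w t = 1 ↔ ℓ (w * t) < ℓ w := by
  constructor
  · intro h
    obtain ⟨ω, hred, rfl⟩ := cs.exists_reduced_word' w
    rw [Nn_wordProd] at h
    have hmem : t ∈ ris ω := by
      by_contra hmem
      rw [List.count_eq_zero.mpr hmem] at h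
      exact absurd h (by decide)
    exact (cs.isRightInversion_of_mem_rightInvSeq hred hmem).2
  · intro hlt
    have hw : w * t * t = w := by rw [mul_assoc, ht.mul_self, mul_one]
    have hmul : Nn cs (w * t * t) t = Nn cs t t + Nn cs (w * t) (t * t * t⁻¹) :=
      Nn_mul cs (w * t) t t
    have htt : t * t * t⁻¹ = t := by rw [ht.mul_self, one_mul, ht.inv]
    have hz : Nn cs (w * t) t = 0 := by
      rcases zmod2_cases (Nn cs (w * t) t) with h | h
      · exact h
      · exfalso
        obtain ⟨ω, hred, hω⟩ := cs.exists_reduced_word' (w * t)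
        rw [hω, Nn_wordProd] at h
        have hmem : t ∈ ris ω := by
          by_contra hmem
          rw [List.count_eq_zero.mpr hmem] at h
          exact absurd h (by decide)
        have := (cs.isRightInversion_of_mem_rightInvSeq hred hmem).2
        rw [← hω, hw] at this
        omega
    rw [hw, htt, Nn_refl_self cs ht, hz, add_zero] at hmul
    exact hmul

/-- Strong exchange property. -/
lemma strong_exchange {t : W} (ht : cs.IsReflection t) (ω : List B)
    (hlt : ℓ (π ω * t) < ℓ (π ω)) :
    ∃ j, ∃ _ : j < ω.length, π (ω.eraseIdx j) = π ω * t := by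
  have h1 : Nn cs (π ω) t = 1 := (Nn_eq_one_iff cs ht _).mpr hlt
  rw [Nn_wordProd] at h1
  have hmem : t ∈ ris ω := by
    by_contra hmem
    rw [List.count_eq_zero.mpr hmem] at h1
    exact absurd h1 (by decide)
  obtain ⟨j, hj, hval⟩ := List.mem_iff_getElem.mp hmem
  rw [cs.length_rightInvSeq] at hj
  refine ⟨j, hj, ?_⟩
  have := cs.wordProd_mul_getD_rightInvSeq ω j
  rw [List.getD_eq_getElem _ _ (by rw [cs.length_rightInvSeq]; exact hj), hval] at this
  exact this.symm

lemma isReduced_nil : cs.IsReduced ([] : List B) := by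
  simp [CoxeterSystem.IsReduced]

lemma sublist_cons_cases {α : Type*} {σ : List α} {i : α} {ω : List α}
    (h : σ.Sublist (i :: ω)) :
    σ.Sublist ω ∨ ∃ σ₁, σ = i :: σ₁ ∧ σ₁.Sublist ω := by
  cases h with
  | cons _ h => exact Or.inl h
  | cons_cons _ h => exact Or.inr ⟨_, rfl, h⟩

lemma isReduced_tail {i : B} {ω : List B} (h : cs.IsReduced (i :: ω)) : cs.IsReduced ω := by
  have := h.drop 1
  simpa using this

/-- The deletion property. -/
lemma deletion_aux : ∀ n (ω : List B), ω.length ≤ n →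
    ∃ σ, σ.Sublist ω ∧ cs.IsReduced σ ∧ π σ = π ω := by
  intro n
  induction n with
  | zero =>
    intro ω h
    have : ω = [] := List.length_eq_zero_iff.mp (Nat.le_zero.mp h)
    subst this
    exact ⟨[], List.Sublist.refl _, isReduced_nil cs, rfl⟩
  | succ n ih =>
    intro ω hlen
    by_cases hred : cs.IsReduced ω
    · exact ⟨ω, List.Sublist.refl _, hred, rfl⟩
    · have hne : ω ≠ [] := by rintro rfl; exact hred (isReduced_nil cs)
      have hlenpos : 0 < ω.length := List.length_pos_iff.mpr hne
      have hP : ∃ j, ¬ cs.IsReduced (ω.take (j+1)) := by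
        refine ⟨ω.length - 1, ?_⟩
        rwa [show ω.length - 1 + 1 = ω.length by omega, List.take_length]
      set j := Nat.find hP with hjdef
      have hj : ¬ cs.IsReduced (ω.take (j+1)) := Nat.find_spec hP
      have hjlt : j < ω.length := by
        have : j ≤ ω.length - 1 := Nat.find_le (by
          rwa [show ω.length - 1 + 1 = ω.length by omega, List.take_length])
        omega
      have hredtake : cs.IsReduced (ω.take j) := by
        rcases Nat.eq_zero_or_eq_succ_pred j with h0 | hsucc
        · rw [h0]; simpa using isReduced_nil cs
        · rw [hsucc]
          exact not_not.mp (Nat.find_min hP (by omega))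
      have htake : ω.take (j+1) = ω.take j ++ [ω[j]] := by
        rw [List.take_succ, List.getElem?_eq_getElem hjlt]
        rfl
      have hlentake : (ω.take j).length = j := by
        rw [List.length_take]; omega
      have hv : ℓ (π (ω.take j)) = j := by
        rw [hredtake, hlentake]
      have hsplit : π (ω.take (j+1)) = π (ω.take j) * s ω[j] := by
        rw [htake, cs.wordProd_append, cs.wordProd_singleton]
      have hlt : ℓ (π (ω.take j) * s ω[j]) < ℓ (π (ω.take j)) := by
        have hne1 : ℓ (π (ω.take (j+1))) ≠ j + 1 := by
          intro h
          apply hj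
          show ℓ (π (ω.take (j+1))) = (ω.take (j+1)).length
          rw [h, List.length_take]
          omega
        have dich := cs.length_mul_simple (π (ω.take j)) ω[j]
        rw [hsplit] at hne1
        omega
      obtain ⟨k, hk, hke⟩ := strong_exchange cs (cs.isReflection_simple ω[j]) (ω.take j) hlt
      set σ₀ := (ω.take j).eraseIdx k ++ ω.drop (j+1) with hσ₀
      have hπ : π σ₀ = π ω := by
        rw [hσ₀, cs.wordProd_append, hke, ← hsplit, ← cs.wordProd_append,
          List.take_append_drop]
      have hsub : σ₀.Sublist ω := by
        have h1 : ((ω.take j).eraseIdx k).Sublist (ω.take j) := List.eraseIdx_sublist _ k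
        have h2 : (ω.drop (j+1)).Sublist (ω.drop j) := by
          rw [← List.tail_drop]
          exact List.tail_sublist _
        have := h1.append h2
        rwa [List.take_append_drop] at this
      have hlen2 : σ₀.length ≤ n := by
        rw [hσ₀, List.length_append, List.length_eraseIdx]
        rw [hlentake] at hk ⊢
        simp only [hk, if_true, List.length_drop]
        omega
      obtain ⟨σ, hs1, hs2, hs3⟩ := ih σ₀ hlen2
      exact ⟨σ, hs1.trans hsub, hs2, by rw [hs3, hπ]⟩

lemma deletion (ω : List B) : ∃ σ, σ.Sublist ω ∧ cs.IsReduced σ ∧ π σ = π ω :=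
  deletion_aux cs ω.length ω le_rfl

/-- The covering-ish relation generating (an order equivalent to) Bruhat order. -/
def Arr (a b : W) : Prop := ∃ t, cs.IsReflection t ∧ b = a * t ∧ ℓ a < ℓ b

/-- Chain (Bruhat) order defined via reflections. -/
def Ch : W → W → Prop := Relation.ReflTransGen (Arr cs)

lemma arr_ascent {w : W} (i : B) (h : ℓ w < ℓ (s i * w)) : Arr cs w (s i * w) := by
  refine ⟨w⁻¹ * s i * w, ?_, by group, h⟩
  have := (cs.isReflection_simple i).conj w⁻¹
  rwa [inv_inv] at this

lemma arr_descent {w : W} (i : B) (h : ℓ (s i * w) < ℓ w) : Arr cs (s i * w) w := by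
  have h2 := arr_ascent cs (w := s i * w) i (by rwa [cs.simple_mul_simple_cancel_left])
  rwa [cs.simple_mul_simple_cancel_left] at h2

/-- The little diamond lemma. -/
lemma diamond {a b : W} (i : B) {t : W} (ht : cs.IsReflection t) (hab : b = a * t)
    (h1 : ℓ b = ℓ a + 1) (hsa : ℓ a < ℓ (s i * a)) (hsb : ℓ (s i * b) < ℓ b) :
    s i * a = b := by
  obtain ⟨ρ, hρred, hρ⟩ := cs.exists_reduced_word' (s i * b)
  have hb : π (i :: ρ) = b := by
    rw [cs.wordProd_cons, ← hρ, cs.simple_mul_simple_cancel_left]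
  have hsb1 : ℓ (s i * b) + 1 = ℓ b := by
    have := cs.length_simple_mul b i
    omega
  have hρlen : ρ.length = ℓ a := by
    have : ℓ (s i * b) = ρ.length := by rw [hρ, hρred]
    omega
  have hba : ℓ (π (i :: ρ) * t) < ℓ (π (i :: ρ)) := by
    rw [hb, hab, mul_assoc, ht.mul_self, mul_one, ← hab]
    omega
  obtain ⟨k, hk, hke⟩ := strong_exchange cs ht (i :: ρ) hba
  rw [hb, hab, mul_assoc, ht.mul_self, mul_one] at hke
  cases k with
  | zero =>
    rw [List.eraseIdx_cons_zero] at hke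
    rw [show a = s i * b from (hρ.trans hke).symm, cs.simple_mul_simple_cancel_left]
  | succ k' =>
    exfalso
    rw [List.eraseIdx_cons_succ] at hke
    rw [cs.wordProd_cons] at hke
    have : s i * a = π (ρ.eraseIdx k') := by rw [← hke, cs.simple_mul_simple_cancel_left]
    have hle : ℓ (s i * a) ≤ (ρ.eraseIdx k').length := by
      rw [this]; exact cs.length_wordProd_le _
    have hklt : k' < ρ.length := by
      simpa using hk
    rw [List.length_eraseIdx] at hle
    simp only [hklt, if_true] at hle
    omega

/-- `maxs i w` is the longer of `w` and `s i * w`. -/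
noncomputable def maxs (i : B) (w : W) : W := if ℓ w < ℓ (s i * w) then s i * w else w

lemma chain_maxs_arr (i : B) {a b : W} (h : Arr cs a b) : Ch cs (maxs cs i a) (maxs cs i b) := by
  obtain ⟨t, ht, rfl, hl⟩ := h
  have dicha := cs.length_simple_mul a i
  have dichb := cs.length_simple_mul (a * t) i
  by_cases ha : ℓ a < ℓ (s i * a) <;> by_cases hb : ℓ (a * t) < ℓ (s i * (a * t)) <;>
    simp only [maxs, ha, hb, if_true, if_false]
  · -- both ascend
    refine Relation.ReflTransGen.single ⟨t, ht, by group, by omega⟩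
  · -- a ascends, b descends
    have hsb : ℓ (s i * (a * t)) < ℓ (a * t) := by
      have := cs.length_simple_mul_ne (a * t) i
      omega
    have hodd : ℓ (a * t) % 2 ≠ ℓ a % 2 := by
      have hmod := cs.length_mul_mod_two a t
      obtain ⟨c, hc⟩ := ht.odd_length
      omega
    rcases eq_or_ne (ℓ (a * t)) (ℓ a + 1) with hgap | hgap
    · rw [diamond cs i ht rfl hgap ha hsb]
      exact Relation.ReflTransGen.refl
    · have hgap3 : ℓ a + 3 ≤ ℓ (a * t) := by omega
      have arr1 : Arr cs (s i * a) (s i * (a * t)) := ⟨t, ht, by group, by omega⟩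
      have arr2 : Arr cs (s i * (a * t)) (a * t) := arr_descent cs i hsb
      exact (Relation.ReflTransGen.single arr1).tail arr2
  · -- a descends, b ascends
    have arr1 : Arr cs a (a * t) := ⟨t, ht, rfl, hl⟩
    have arr2 : Arr cs (a * t) (s i * (a * t)) := arr_ascent cs i hb
    exact (Relation.ReflTransGen.single arr1).tail arr2
  · exact Relation.ReflTransGen.single ⟨t, ht, rfl, hl⟩

lemma chain_maxs (i : B) {a b : W} (h : Ch cs a b) : Ch cs (maxs cs i a) (maxs cs i b) := by
  induction h with
  | refl => exact Relation.ReflTransGen.refl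
  | tail hc harr ih => exact ih.trans (chain_maxs_arr cs i harr)

lemma chain_smul_of_ascend (i : B) {a b : W} (h : Ch cs a b) (hb : ℓ b < ℓ (s i * b)) :
    Ch cs (s i * a) (s i * b) := by
  have h1 : Ch cs (s i * a) (maxs cs i a) := by
    by_cases ha : ℓ a < ℓ (s i * a)
    · simp only [maxs, ha, if_true]
      exact Relation.ReflTransGen.refl
    · simp only [maxs, ha, if_false]
      have hlt : ℓ (s i * a) < ℓ a := by
        have := cs.length_simple_mul_ne a i
        omega
      exact Relation.ReflTransGen.single (arr_descent cs i hlt)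
  have h2 := chain_maxs cs i h
  have h3 : maxs cs i b = s i * b := by simp only [maxs, hb, if_true]
  rw [h3] at h2
  exact h1.trans h2

/-- Subword implies chain order. -/
lemma sublist_chain_aux : ∀ n (ω σ : List B), ω.length ≤ n → cs.IsReduced ω → σ.Sublist ω →
    Ch cs (π σ) (π ω) := by
  intro n
  induction n with
  | zero =>
    intro ω σ hlen _ hsub
    have : ω = [] := List.length_eq_zero_iff.mp (Nat.le_zero.mp hlen)
    subst this
    rw [List.sublist_nil.mp hsub]
    exact Relation.ReflTransGen.refl
  | succ n ih =>
    intro ω σ hlen hred hsub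
    obtain ⟨σ', hs1, hs2, hs3⟩ := deletion cs σ
    rw [← hs3]
    have hsub' : σ'.Sublist ω := hs1.trans hsub
    clear hs1 hs3 hsub σ
    cases ω with
    | nil =>
      rw [List.sublist_nil.mp hsub']
      exact Relation.ReflTransGen.refl
    | cons i ω₁ =>
      have hred₁ : cs.IsReduced ω₁ := isReduced_tail cs hred
      have hlen₁ : ω₁.length ≤ n := by
        simp only [List.length_cons] at hlen
        omega
      have hasc : ℓ (π ω₁) < ℓ (s i * π ω₁) := by
        rw [← cs.wordProd_cons, hred, hred₁]
        simp
      rcases sublist_cons_cases hsub' with h | ⟨σ₁, rfl, h⟩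
      · have hch := ih ω₁ σ' hlen₁ hred₁ h
        refine hch.tail ?_
        rw [cs.wordProd_cons]
        exact arr_ascent cs i hasc
      · have hred₂ : cs.IsReduced σ₁ := isReduced_tail cs hs2
        have hch := ih ω₁ σ₁ hlen₁ hred₁ h
        rw [cs.wordProd_cons, cs.wordProd_cons]
        exact chain_smul_of_ascend cs i hch hasc

lemma sublist_chain {ω σ : List B} (hred : cs.IsReduced ω) (hsub : σ.Sublist ω) :
    Ch cs (π σ) (π ω) :=
  sublist_chain_aux cs ω.length ω σ le_rfl hred hsub

/-- Chain order implies subword, for every reduced word. -/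
lemma chain_subword {u w : W} (h : Ch cs u w) :
    ∀ τ : List B, cs.IsReduced τ → π τ = w →
      ∃ σ, σ.Sublist τ ∧ cs.IsReduced σ ∧ π σ = u := by
  induction h with
  | refl => intro τ hτ hπ; exact ⟨τ, List.Sublist.refl _, hτ, hπ⟩
  | tail hcb harr ih =>
    obtain ⟨t, ht, rfl, hl⟩ := harr
    rename_i c _
    intro τ hτ hπτ
    have hlt : ℓ (π τ * t) < ℓ (π τ) := by
      rw [hπτ, mul_assoc, ht.mul_self, mul_one]
      exact hl
    obtain ⟨k, hk, hke⟩ := strong_exchange cs ht τ hlt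
    rw [hπτ, mul_assoc, ht.mul_self, mul_one] at hke
    obtain ⟨σ', h1, h2, h3⟩ := deletion cs (τ.eraseIdx k)
    obtain ⟨σ, hs1, hs2, hs3⟩ := ih σ' h2 (by rw [h3, hke])
    exact ⟨σ, hs1.trans (h1.trans (List.eraseIdx_sublist _ _)), hs2, hs3⟩

lemma bruhatLE_chain {u w : W} (h : BruhatLE cs u w) : Ch cs u w := by
  obtain ⟨ω, hred, rfl, ω', hsub, hred', rfl⟩ := h
  exact sublist_chain cs hred hsub

lemma bruhatLE_every_word {u w : W} (h : BruhatLE cs u w) {τ : List B}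
    (hτ : cs.IsReduced τ) (hπ : π τ = w) :
    ∃ σ, σ.Sublist τ ∧ cs.IsReduced σ ∧ π σ = u :=
  chain_subword cs (bruhatLE_chain cs h) τ hτ hπ

lemma bruhat_prepend {u w : W} (i : B) (hu : ℓ u < ℓ (s i * u)) (hw : ℓ w < ℓ (s i * w))
    (h : BruhatLE cs u w) : BruhatLE cs (s i * u) (s i * w) := by
  obtain ⟨ω, hred, rfl, ω', hsub, hred', rfl⟩ := h
  refine ⟨i :: ω, ?_, by rw [cs.wordProd_cons], i :: ω', List.Sublist.cons₂ i hsub, ?_,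
    by rw [cs.wordProd_cons]⟩
  · show ℓ (π (i :: ω)) = (i :: ω).length
    rw [cs.wordProd_cons, List.length_cons]
    have hd := cs.length_simple_mul (π ω) i
    have : ℓ (s i * π ω) = ℓ (π ω) + 1 := by omega
    rw [this, hred]
  · show ℓ (π (i :: ω')) = (i :: ω').length
    rw [cs.wordProd_cons, List.length_cons]
    have hd := cs.length_simple_mul (π ω') i
    have : ℓ (s i * π ω') = ℓ (π ω') + 1 := by omega
    rw [this, hred']

lemma bruhat_lift_down {u w : W} (i : B) (hu : ℓ (s i * u) < ℓ u) (hw : ℓ (s i * w) < ℓ w)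
    (h : BruhatLE cs u w) : BruhatLE cs (s i * u) (s i * w) := by
  obtain ⟨ρ, hρred, hρ⟩ := cs.exists_reduced_word' (s i * w)
  have hρl : ρ.length = ℓ (s i * w) := by rw [hρ, hρred]
  have hτπ : π (i :: ρ) = w := by
    rw [cs.wordProd_cons, ← hρ, cs.simple_mul_simple_cancel_left]
  have hτred : cs.IsReduced (i :: ρ) := by
    show ℓ (π (i :: ρ)) = _
    rw [hτπ, List.length_cons, hρl]
    have := cs.length_simple_mul w i
    omega
  obtain ⟨σ, hsub, hσred, hσπ⟩ := bruhatLE_every_word cs h hτred hτπ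
  rcases sublist_cons_cases hsub with hs | ⟨σ₁, rfl, hs⟩
  · -- left exchange inside σ
    have hrev : cs.IsReduced σ.reverse := (cs.isReduced_reverse_iff σ).mpr hσred
    have hlt : ℓ (π σ.reverse * s i) < ℓ (π σ.reverse) := by
      rw [cs.wordProd_reverse, hσπ]
      have h1 : ℓ (u⁻¹ * s i) = ℓ (s i * u) := by
        rw [← cs.length_inv (u⁻¹ * s i), mul_inv_rev, cs.inv_simple, inv_inv]
      rw [h1, cs.length_inv]
      exact hu
    obtain ⟨k, hk, hke⟩ := strong_exchange cs (cs.isReflection_simple i) σ.reverse hlt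
    set β := (σ.reverse.eraseIdx k).reverse with hβ
    have hβπ : π β = s i * u := by
      rw [hβ, cs.wordProd_reverse, hke, cs.wordProd_reverse, hσπ, mul_inv_rev, cs.inv_simple,
        inv_inv]
    have hβsub : β.Sublist σ := by
      have := (List.eraseIdx_sublist σ.reverse k).reverse
      rwa [List.reverse_reverse] at this
    have hβred : cs.IsReduced β := by
      show ℓ (π β) = β.length
      rw [hβπ, hβ, List.length_reverse, List.length_eraseIdx]
      simp only [hk, if_true]
      have hσl : σ.length = ℓ u := by rw [← hσπ]; exact hσred.symm
      have := cs.length_simple_mul u i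
      rw [List.length_reverse, hσl]
      omega
    exact ⟨ρ, hρred, hρ.symm, β, hβsub.trans hs, hβred, hβπ⟩
  · -- σ = i :: σ₁
    have hπ₁ : π σ₁ = s i * u := by
      rw [cs.wordProd_cons] at hσπ
      rw [← hσπ, cs.simple_mul_simple_cancel_left]
    exact ⟨ρ, hρred, hρ.symm, σ₁, hs, isReduced_tail cs hσred, hπ₁⟩

lemma mem_para_word {S : Set B} {u : W} (hu : u ∈ paraSubgroup cs S) :
    ∃ α : List B, (∀ b ∈ α, b ∈ S) ∧ π α = u := by
  induction hu using Subgroup.closure_induction with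
  | mem x hx =>
    obtain ⟨i, hi, rfl⟩ := hx
    exact ⟨[i], by simpa using hi, by simp⟩
  | one => exact ⟨[], by simp, by simp⟩
  | mul a b ha hb iha ihb =>
    obtain ⟨α, hα, rfl⟩ := iha
    obtain ⟨β, hβ, rfl⟩ := ihb
    refine ⟨α ++ β, ?_, by rw [cs.wordProd_append]⟩
    intro b hb
    rcases List.mem_append.mp hb with h | h
    · exact hα b h
    · exact hβ b h
  | inv a ha iha =>
    obtain ⟨α, hα, rfl⟩ := iha
    exact ⟨α.reverse, fun b hb => hα b (List.mem_reverse.mp hb), by rw [cs.wordProd_reverse]⟩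

lemma wordProd_mem_para {S : Set B} {α : List B} (hα : ∀ b ∈ α, b ∈ S) :
    π α ∈ paraSubgroup cs S := by
  induction α with
  | nil => rw [cs.wordProd_nil]; exact Subgroup.one_mem _
  | cons i α ih =>
    rw [cs.wordProd_cons]
    refine Subgroup.mul_mem _ (Subgroup.subset_closure ⟨i, hα i (by simp), rfl⟩) ?_
    exact ih (fun b hb => hα b (by simp [hb]))

lemma ris_mem_para {S : Set B} : ∀ {α : List B}, (∀ b ∈ α, b ∈ S) →
    ∀ r ∈ ris α, r ∈ paraSubgroup cs S := by
  intro α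
  induction α with
  | nil => intro _ r hr; simp at hr
  | cons i α ih =>
    intro hα r hr
    have hris : ris (i :: α) = ((π α)⁻¹ * s i * π α) :: ris α := rfl
    rw [hris, List.mem_cons] at hr
    rcases hr with rfl | hr
    · have h1 : π α ∈ paraSubgroup cs S := wordProd_mem_para cs (fun b hb => hα b (by simp [hb]))
      have h2 : s i ∈ paraSubgroup cs S := Subgroup.subset_closure ⟨i, hα i (by simp), rfl⟩
      exact Subgroup.mul_mem _ (Subgroup.mul_mem _ (Subgroup.inv_mem _ h1) h2) h1
    · exact ih (fun b hb => hα b (by simp [hb])) r hr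

lemma Nn_eq_zero_of_para {S : Set B} {u t : W} (hu : u ∈ paraSubgroup cs S)
    (ht : t ∉ paraSubgroup cs S) : Nn cs u t = 0 := by
  obtain ⟨α, hα, rfl⟩ := mem_para_word cs hu
  rw [Nn_wordProd]
  have hc : (ris α).count t = 0 :=
    List.count_eq_zero.mpr (fun hmem => ht (ris_mem_para cs hα t hmem))
  rw [hc, Nat.cast_zero]

/-- If `w` has no inversions inside the parabolic subgroup, lengths add. -/
lemma para_formula_aux {S : Set B} {w : W}
    (hw : ∀ r ∈ paraSubgroup cs S, cs.IsReflection r → Nn cs w r = 0) :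
    ∀ n u, u ∈ paraSubgroup cs S → ℓ u = n → ℓ (w * u) = ℓ w + ℓ u := by
  intro n
  induction n using Nat.strong_induction_on with
  | _ n ih =>
    intro u hu hn
    rcases eq_or_ne u 1 with rfl | hne
    · simp
    · obtain ⟨α, hα, hπα⟩ := mem_para_word cs hu
      obtain ⟨α', hsubα, hredα, hπ'⟩ := deletion cs α
      have hα' : ∀ b ∈ α', b ∈ S := fun b hb => hα b (hsubα.subset hb)
      have hπu : π α' = u := by rw [hπ', hπα]
      have hα'ne : α' ≠ [] := by
        rintro rfl
        exact hne (by rw [← hπu, cs.wordProd_nil])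
      obtain ⟨β, i, hconcat⟩ := (List.eq_nil_or_concat α').resolve_left hα'ne
      subst hconcat
      have hβmem : ∀ b ∈ β, b ∈ S := fun b hb => hα' b (by
        rw [List.concat_eq_append]; exact List.mem_append_left _ hb)
      have hπsplit : u = π β * s i := by
        rw [← hπu, List.concat_eq_append, cs.wordProd_append, cs.wordProd_singleton]
      have hβred : cs.IsReduced β := by
        have := hredα.take β.length
        rwa [List.concat_eq_append, List.take_left] at this
      have hu' : π β ∈ paraSubgroup cs S := wordProd_mem_para cs hβmem
      have hlu' : ℓ (π β) = β.length := hβred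
      have hlu : ℓ u = β.length + 1 := by
        rw [← hπu, hredα, List.concat_eq_append, List.length_append, List.length_singleton]
      have ihu' : ℓ (w * π β) = ℓ w + ℓ (π β) := by
        refine ih β.length (by omega) (π β) hu' hlu'
      have himem : i ∈ S := by
        refine hα' i ?_
        rw [List.concat_eq_append]
        exact List.mem_append_right _ (by simp)
      have hsi : s i ∈ paraSubgroup cs S := Subgroup.subset_closure ⟨i, himem, rfl⟩
      have hdich := cs.length_mul_simple (w * π β) i
      rcases hdich with hup | hdown
      · rw [hπsplit, ← mul_assoc, hup, ihu', ← hπsplit]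
        omega
      · exfalso
        have hN : Nn cs (w * π β) (s i) = 1 := by
          refine (Nn_eq_one_iff cs (cs.isReflection_simple i) _).mpr ?_
          omega
        have hsplit := Nn_mul cs w (π β) (s i)
        have h1 : Nn cs (π β) (s i) = 0 := by
          rcases zmod2_cases (Nn cs (π β) (s i)) with h | h
          · exact h
          · exfalso
            have := (Nn_eq_one_iff cs (cs.isReflection_simple i) _).mp h
            rw [← hπsplit] at this
            omega
        have h2 : Nn cs w (π β * s i * (π β)⁻¹) = 0 :=
          hw _ (Subgroup.mul_mem _ (Subgroup.mul_mem _ hu' hsi) (Subgroup.inv_mem _ hu'))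
            ((cs.isReflection_simple i).conj (π β))
        have : (1 : ZMod 2) = 0 := by
          rw [← hN, hsplit, h1, h2, add_zero]
        exact absurd this (by decide)

lemma para_formula {S : Set B} {w : W}
    (hw : ∀ r ∈ paraSubgroup cs S, cs.IsReflection r → Nn cs w r = 0)
    {u : W} (hu : u ∈ paraSubgroup cs S) : ℓ (w * u) = ℓ w + ℓ u :=
  para_formula_aux cs hw (ℓ u) u hu rfl


end Machinery

lemma mem_leftCosetOf (cs : CoxeterSystem M W) {S : Set B} {x z : W} :
    z ∈ leftCosetOf cs S x ↔ x⁻¹ * z ∈ paraSubgroup cs S := Iff.rfl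

/-- If `x ∈ W^λ` and `s` is a simple reflection with `s·x ∉ x·W_λ`, then
`s·x ∈ W^λ` and left multiplication by `s` is an isomorphism of directed graphs of
Bruhat covers from `x·W_λ` onto `(s·x)·W_λ`. -/
theorem simple_mul_minRep_of_not_mem_coset
    (cs : CoxeterSystem M W) (S : Set B) (x : W) (s : B)
    (hx : IsMinRep cs S x)
    (hs : cs.simple s * x ∉ leftCosetOf cs S x) :
    IsMinRep cs S (cs.simple s * x) ∧
    Set.BijOn (fun z => cs.simple s * z) (leftCosetOf cs S x)
      (leftCosetOf cs S (cs.simple s * x)) ∧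
    ∀ z ∈ leftCosetOf cs S x, ∀ z' ∈ leftCosetOf cs S x,
      (BruhatCov cs z z' ↔ BruhatCov cs (cs.simple s * z) (cs.simple s * z')) := by
  set ss := cs.simple s with hss
  set t := x⁻¹ * ss * x with htdef
  have ht_refl : cs.IsReflection t := by
    have := (cs.isReflection_simple s).conj x⁻¹
    rwa [inv_inv, ← hss, ← htdef] at this
  have ht_not : t ∉ paraSubgroup cs S := by
    intro hmem
    apply hs
    rw [mem_leftCosetOf cs]
    rwa [show x⁻¹ * (ss * x) = t by rw [htdef]; group]
  -- x has no reflection inversions in the parabolic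
  have hxN : ∀ r ∈ paraSubgroup cs S, cs.IsReflection r → Nn cs x r = 0 := by
    intro r hr hrefl
    rcases zmod2_cases (Nn cs x r) with h | h
    · exact h
    · exfalso
      have hlt := (Nn_eq_one_iff cs hrefl x).mp h
      have hmem : x * r ∈ leftCosetOf cs S x := by
        rw [mem_leftCosetOf, inv_mul_cancel_left]
        exact hr
      have := hx (x * r) hmem
      omega
  -- s*x has no reflection inversions in the parabolic
  have hsxN : ∀ r ∈ paraSubgroup cs S, cs.IsReflection r → Nn cs (ss * x) r = 0 := by
    intro r hr hrefl
    have hmul := Nn_mul cs ss x r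
    have h1 : Nn cs x r = 0 := hxN r hr hrefl
    have h2 : Nn cs ss (x * r * x⁻¹) = 0 := by
      rw [Nn_simple]
      rw [if_neg]
      intro hcontra
      apply ht_not
      have : r = x⁻¹ * ss * x := by rw [hss, ← hcontra]; group
      rwa [htdef, ← this]
    rw [hmul, h1, h2, add_zero]
  -- direction uniformity
  have hdir : ∀ z ∈ leftCosetOf cs S x, (cs.length (ss * z) < cs.length z ↔ Nn cs x t = 1) := by
    intro z hz
    rw [mem_leftCosetOf cs] at hz
    set u := x⁻¹ * z with hu
    have hzx : z = x * u := by rw [hu, mul_inv_cancel_left]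
    have hrw : z * (z⁻¹ * ss * z) = ss * z := by group
    have hzconj : z⁻¹ * ss * z = u⁻¹ * t * u := by rw [hzx, htdef]; group
    have hreflz : cs.IsReflection (z⁻¹ * ss * z) := by
      have := (cs.isReflection_simple s).conj z⁻¹
      rwa [inv_inv, ← hss] at this
    have hNz : Nn cs z (z⁻¹ * ss * z) = Nn cs x t := by
      rw [hzconj, hzx]
      have hmul := Nn_mul cs x u (u⁻¹ * t * u)
      have h1 : Nn cs u (u⁻¹ * t * u) = 0 := by
        refine Nn_eq_zero_of_para cs hz ?_
        intro hmem
        apply ht_not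
        have : t = u * (u⁻¹ * t * u) * u⁻¹ := by group
        rw [this]
        exact Subgroup.mul_mem _ (Subgroup.mul_mem _ hz hmem) (Subgroup.inv_mem _ hz)
      have h2 : u * (u⁻¹ * t * u) * u⁻¹ = t := by group
      rw [hmul, h1, h2, zero_add]
    rw [← hNz, Nn_eq_one_iff cs hreflz z, hrw]
  constructor
  · -- IsMinRep (s * x)
    intro z hz
    rw [mem_leftCosetOf cs] at hz
    have hzx : z = (ss * x) * ((ss * x)⁻¹ * z) := by rw [mul_inv_cancel_left]
    rw [hzx, para_formula cs hsxN hz]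
    omega
  constructor
  · -- BijOn
    refine ⟨?_, ?_, ?_⟩
    · intro z hz
      rw [mem_leftCosetOf cs] at hz ⊢
      rwa [show (ss * x)⁻¹ * (ss * z) = x⁻¹ * z by group]
    · intro a _ b _ hab
      exact mul_left_cancel hab
    · intro y hy
      rw [mem_leftCosetOf cs] at hy
      refine ⟨ss * y, ?_, ?_⟩
      · rw [mem_leftCosetOf cs]
        rwa [show x⁻¹ * (ss * y) = (ss * x)⁻¹ * y by
          rw [hss, mul_inv_rev, cs.inv_simple]; group]
      · show ss * (ss * y) = y
        rw [hss, cs.simple_mul_simple_cancel_left]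
  · -- covers
    intro z hz z' hz'
    have hdz := hdir z hz
    have hdz' := hdir z' hz'
    have dz := cs.length_simple_mul z s
    have dz' := cs.length_simple_mul z' s
    rw [← hss] at dz dz'
    have hcancel : ∀ v : W, ss * (ss * v) = v := fun v => by
      rw [hss, cs.simple_mul_simple_cancel_left]
    have hne_iff : z ≠ z' ↔ ss * z ≠ ss * z' := by
      constructor
      · intro h hc; exact h (mul_left_cancel hc)
      · intro h hc; exact h (by rw [hc])
    by_cases hN : Nn cs x t = 1
    · -- s descends on the whole coset
      have h1 : cs.length (ss * z) < cs.length z := hdz.mpr hN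
      have h1' : cs.length (ss * z') < cs.length z' := hdz'.mpr hN
      constructor
      · rintro ⟨⟨hle, hne⟩, hlen⟩
        refine ⟨⟨?_, hne_iff.mp hne⟩, by omega⟩
        rw [hss]
        exact bruhat_lift_down cs s (by rw [← hss]; exact h1) (by rw [← hss]; exact h1') hle
      · rintro ⟨⟨hle, hne⟩, hlen⟩
        refine ⟨⟨?_, fun hc => hne (by rw [hc])⟩, by omega⟩
        have hasc : cs.length (ss * z) < cs.length (ss * (ss * z)) := by rw [hcancel]; exact h1
        have hasc' : cs.length (ss * z') < cs.length (ss * (ss * z'))  := by rw [hcancel]; exact h1'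
        have := bruhat_prepend cs s (by rw [← hss]; exact hasc) (by rw [← hss]; exact hasc') hle
        rwa [← hss, hcancel, hcancel] at this
    · -- s ascends on the whole coset
      have hne1 := cs.length_simple_mul_ne z s
      have hne1' := cs.length_simple_mul_ne z' s
      rw [← hss] at hne1 hne1'
      have h1 : cs.length z < cs.length (ss * z) := by
        have := mt hdz.mp hN
        omega
      have h1' : cs.length z' < cs.length (ss * z') := by
        have := mt hdz'.mp hN
        omega
      constructor
      · rintro ⟨⟨hle, hne⟩, hlen⟩
        refine ⟨⟨?_, hne_iff.mp hne⟩, by omega⟩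
        rw [hss]
        exact bruhat_prepend cs s (by rw [← hss]; exact h1) (by rw [← hss]; exact h1') hle
      · rintro ⟨⟨hle, hne⟩, hlen⟩
        refine ⟨⟨?_, fun hc => hne (by rw [hc])⟩, by omega⟩
        have hdesc : cs.length (ss * (ss * z)) < cs.length (ss * z) := by rw [hcancel]; exact h1
        have hdesc' : cs.length (ss * (ss * z')) < cs.length (ss * z') := by rw [hcancel]; exact h1'
        have := bruhat_lift_down cs s (by rw [← hss]; exact hdesc) (by rw [← hss]; exact hdesc') hle
        rwa [← hss, hcancel, hcancel] at this


end SingularBGG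
end

section
/- If the sequence A →α B →(β,γ) C ⊕ G →M D ⊕ G →(δ,δ') E →ε F is a complex (i.e. every composite of two consecutive maps is zero), then the sequence A →α B →β C →(f − h∘g) D →δ E →ε F is also a complex; and if the first sequence is exact (at B, at C ⊕ G, at D ⊕ G, and at E), then the second sequence is exact (at B, at C, at D, and at E). -/
/-!
**Statement 10** (cutting off an identity summand from a complex).
Let `R` be a ring and `A, B, C, D, E, F, G` be `R`-modules, with `R`-linear maps
`α : A → B`, `β : B → C`, `γ : B → G`, `f : C → D`, `g : C → G`, `h : G → D`,
`δ : D → E`, `δ' : G → E`, `ε : E → F`. Consider the sequence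
`A →α B →(β,γ) C ⊕ G →M D ⊕ G →(δ,δ') E →ε F`, where `M(c, x) = (f c + h x, g c + x)`
(so its `G`-to-`G` component is the identity). If this sequence is a complex, then so is
`A →α B →β C →(f − h∘g) D →δ E →ε F`; and if the first sequence is exact (at `B`,
`C ⊕ G`, `D ⊕ G`, `E`), then the second is exact (at `B`, `C`, `D`, `E`).
-/

theorem cutting_off_equalities
    {R : Type*} [Ring R] {A B C D E F G : Type*}
    [AddCommGroup A] [AddCommGroup B] [AddCommGroup C] [AddCommGroup D]
    [AddCommGroup E] [AddCommGroup F] [AddCommGroup G]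
    [Module R A] [Module R B] [Module R C] [Module R D]
    [Module R E] [Module R F] [Module R G]
    (α : A →ₗ[R] B) (β : B →ₗ[R] C) (γ : B →ₗ[R] G)
    (f : C →ₗ[R] D) (g : C →ₗ[R] G) (h : G →ₗ[R] D)
    (δ : D →ₗ[R] E) (δ' : G →ₗ[R] E) (ε : E →ₗ[R] F)
    -- the map `B → C ⊕ G`, `b ↦ (β b, γ b)`
    (m₁ : B →ₗ[R] C × G) (hm₁ : m₁ = β.prod γ)
    -- the middle map `M : C ⊕ G → D ⊕ G`, `(c, x) ↦ (f c + h x, g c + x)`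
    (m : C × G →ₗ[R] D × G)
    (hm : m = (f.comp (LinearMap.fst R C G) + h.comp (LinearMap.snd R C G)).prod
      (g.comp (LinearMap.fst R C G) + LinearMap.snd R C G))
    -- the map `D ⊕ G → E`, `(d, x) ↦ δ d + δ' x`
    (m₂ : D × G →ₗ[R] E) (hm₂ : m₂ = δ.comp (LinearMap.fst R D G) + δ'.comp (LinearMap.snd R D G)) :
    -- if the first sequence is a complex, then so is the second
    ((m₁.comp α = 0 ∧ m.comp m₁ = 0 ∧ m₂.comp m = 0 ∧ ε.comp m₂ = 0) →
      (β.comp α = 0 ∧ (f - h.comp g).comp β = 0 ∧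
        δ.comp (f - h.comp g) = 0 ∧ ε.comp δ = 0)) ∧
    -- if the first sequence is exact (at B, C ⊕ G, D ⊕ G, E), then the second is exact
    -- (at B, C, D, E)
    ((Function.Exact α m₁ ∧ Function.Exact m₁ m ∧ Function.Exact m m₂ ∧
        Function.Exact m₂ ε) →
      (Function.Exact α β ∧ Function.Exact β (f - h.comp g) ∧
        Function.Exact (f - h.comp g) δ ∧ Function.Exact δ ε)) := by
  subst hm₁ hm hm₂
  have hmap : ∀ (c : C) (x : G),
      ((f.comp (LinearMap.fst R C G) + h.comp (LinearMap.snd R C G)).prod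
        (g.comp (LinearMap.fst R C G) + LinearMap.snd R C G)) (c, x)
      = (f c + h x, g c + x) := by
    intro c x
    simp [LinearMap.prod_apply, Pi.prod]
  have hm2ap : ∀ (d : D) (x : G),
      (δ.comp (LinearMap.fst R D G) + δ'.comp (LinearMap.snd R D G)) (d, x) = δ d + δ' x := by
    intro d x; simp
  have hprodap : ∀ b : B, (β.prod γ) b = (β b, γ b) := by
    intro b; simp [LinearMap.prod_apply, Pi.prod]
  constructor
  · rintro ⟨h1, h2, h3, h4⟩
    refine ⟨?_, ?_, ?_, ?_⟩
    · ext a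
      have t := LinearMap.congr_fun h1 a
      rw [LinearMap.comp_apply, hprodap] at t
      simp only [LinearMap.zero_apply, Prod.mk_eq_zero] at t
      simpa using t.1
    · ext b
      have t := LinearMap.congr_fun h2 b
      rw [LinearMap.comp_apply, hprodap, hmap] at t
      simp only [LinearMap.zero_apply, Prod.mk_eq_zero] at t
      obtain ⟨t1, t2⟩ := t
      have hg : γ b = - g (β b) := by
        rw [eq_neg_iff_add_eq_zero, add_comm]; exact t2
      rw [hg, map_neg, ← sub_eq_add_neg] at t1
      simpa using t1
    · ext c
      have t := LinearMap.congr_fun h3 (c, -g c)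
      rw [LinearMap.comp_apply, hmap, add_neg_cancel, hm2ap, map_zero, add_zero] at t
      simp only [LinearMap.comp_apply, LinearMap.sub_apply, LinearMap.zero_apply]
      simpa [map_neg, sub_eq_add_neg] using t
    · ext d
      have t := LinearMap.congr_fun h4 (d, 0)
      rw [LinearMap.comp_apply, hm2ap] at t
      simpa using t
  · rintro ⟨e1, e2, e3, e4⟩
    have c2 : ∀ b, f (β b) + h (γ b) = 0 ∧ g (β b) + γ b = 0 := by
      intro b
      have t := e2.apply_apply_eq_zero b
      rw [hprodap, hmap] at t
      simpa only [Prod.mk_eq_zero] using t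
    have c3 : ∀ (c : C) (x : G), δ (f c + h x) + δ' (g c + x) = 0 := by
      intro c x
      have t := e3.apply_apply_eq_zero (c, x)
      rw [hmap, hm2ap] at t
      exact t
    refine ⟨?_, ?_, ?_, ?_⟩
    · intro b
      constructor
      · intro hb
        have hγ : γ b = 0 := by
          have t := (c2 b).2
          rw [hb, map_zero, zero_add] at t
          exact t
        have : (β.prod γ) b = 0 := by rw [hprodap, hb, hγ]; rfl
        exact (e1 b).mp this
      · rintro ⟨a, rfl⟩
        have t := e1.apply_apply_eq_zero a
        rw [hprodap] at t
        simp only [Prod.mk_eq_zero] at t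
        exact t.1
    · intro c
      constructor
      · intro hc
        simp only [LinearMap.sub_apply, LinearMap.comp_apply, sub_eq_zero] at hc
        have hz : ((f.comp (LinearMap.fst R C G) + h.comp (LinearMap.snd R C G)).prod
            (g.comp (LinearMap.fst R C G) + LinearMap.snd R C G)) (c, -g c) = 0 := by
          rw [hmap]
          simp [Prod.ext_iff, hc, map_neg]
        obtain ⟨b, hb⟩ := (e2 (c, -g c)).mp hz
        rw [hprodap] at hb
        exact ⟨b, (Prod.mk.injEq _ _ _ _ ▸ hb).1⟩
      · rintro ⟨b, rfl⟩
        obtain ⟨t1, t2⟩ := c2 b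
        have hg : γ b = - g (β b) := by
          rw [eq_neg_iff_add_eq_zero, add_comm]; exact t2
        rw [hg, map_neg, ← sub_eq_add_neg] at t1
        simpa using t1
    · intro d
      constructor
      · intro hd
        have hz : (δ.comp (LinearMap.fst R D G) + δ'.comp (LinearMap.snd R D G)) (d, (0:G)) = 0 := by
          rw [hm2ap]; simp [hd]
        obtain ⟨⟨c, x⟩, hcx⟩ := (e3 (d, 0)).mp hz
        rw [hmap] at hcx
        obtain ⟨hcx1, hcx2⟩ := Prod.mk.injEq _ _ _ _ ▸ hcx
        refine ⟨c, ?_⟩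
        have hx : x = - g c := by
          rw [eq_neg_iff_add_eq_zero, add_comm]; exact hcx2
        rw [hx] at hcx1
        simpa [map_neg, sub_eq_add_neg] using hcx1
      · rintro ⟨c, rfl⟩
        have t := c3 c (-g c)
        rw [add_neg_cancel, map_zero, add_zero] at t
        simp only [LinearMap.sub_apply, LinearMap.comp_apply]
        simpa [map_neg, sub_eq_add_neg] using t
    · intro e
      constructor
      · intro he
        obtain ⟨⟨d, x⟩, hdx⟩ := (e4 e).mp he
        rw [hm2ap] at hdx
        have hδ' : δ' x = - δ (h x) := by
          have t := c3 0 x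
          rw [map_zero, zero_add, map_zero, zero_add] at t
          rw [eq_neg_iff_add_eq_zero, add_comm]
          exact t
        refine ⟨d - h x, ?_⟩
        rw [map_sub, ← hdx, hδ']
        abel
      · rintro ⟨d, rfl⟩
        have t := e4.apply_apply_eq_zero (d, (0:G))
        rw [hm2ap] at t
        simpa using t
end
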